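/- Let U be a symmetric positive-semidefinite m×m real matrix whose eigenvalues all lie in [0,1], and let σ ≥ 1. Then I + (σ−1)U is invertible and for every d ∈ ℝ^m, ‖(I + (σ−1)U)⁻¹(I − U) d‖ ≥ ‖(I − U U†) d‖, where U† is the Moore–Penrose inverse of U. -/

import Mathlib

open Matrix

/-- If `U` is symmetric PSD with all eigenvalues in `[0,1]` and `σ ≥ 1`,
then `I + (σ−1)U` is invertible and `‖(I + (σ−1)U)⁻¹(I − U) d‖ ≥ ‖(I − U U†) d‖`
for all `d`, where `U†` is the Moore–Penrose inverse of `U`. -/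
theorem stmt1 (m : ℕ) (U : Matrix (Fin m) (Fin m) ℝ)
    (hUsym : Uᵀ = U) (hUpsd : U.PosSemidef)
    (hspec : ∀ μ ∈ spectrum ℝ U, μ ∈ Set.Icc (0 : ℝ) 1)
    (σ : ℝ) (hσ : 1 ≤ σ)
    (Upinv : Matrix (Fin m) (Fin m) ℝ)
    (hmp1 : U * Upinv * U = U) (hmp2 : Upinv * U * Upinv = Upinv)
    (hmp3 : (U * Upinv)ᵀ = U * Upinv) (hmp4 : (Upinv * U)ᵀ = Upinv * U) :
    IsUnit (1 + (σ - 1) • U) ∧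
      ∀ d : Fin m → ℝ,
        Real.sqrt (∑ i, (((1 - U * Upinv) *ᵥ d) i) ^ 2) ≤
          Real.sqrt (∑ i, (((1 + (σ - 1) • U)⁻¹ *ᵥ ((1 - U) *ᵥ d)) i) ^ 2) := by
  have hσ' : (0 : ℝ) ≤ σ - 1 := by linarith
  set A : Matrix (Fin m) (Fin m) ℝ := 1 + (σ - 1) • U with hAdef
  have hsm : ((σ - 1) • U).PosSemidef := by
    refine posSemidef_iff_dotProduct_mulVec.mpr ⟨?_, fun x => ?_⟩
    · rw [Matrix.IsHermitian, conjTranspose_smul, hUpsd.1, star_trivial]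
    · rw [smul_mulVec, dotProduct_smul]
      have := hUpsd.dotProduct_mulVec_nonneg x
      simpa using mul_nonneg hσ' (by simpa using this)
  have hApd : A.PosDef := Matrix.PosDef.one.add_posSemidef hsm
  have hUnit : IsUnit A := hApd.isUnit
  have hdet : IsUnit A.det := (Matrix.isUnit_iff_isUnit_det A).mp hUnit
  refine ⟨hUnit, fun d => ?_⟩
  set P : Matrix (Fin m) (Fin m) ℝ := 1 - U * Upinv with hPdef
  have hPU : P * U = 0 := by
    rw [hPdef, sub_mul, one_mul, mul_assoc, ← mul_assoc U Upinv U, hmp1, sub_self]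
  have hPP : P * P = P := by
    have h2 : U * Upinv * (U * Upinv) = U * Upinv := by
      rw [← mul_assoc, hmp1]
    rw [hPdef, sub_mul, mul_sub, mul_sub, one_mul, mul_one, h2]
    rw [one_mul]
    abel
  have hPt : Pᵀ = P := by rw [hPdef, transpose_sub, transpose_one, hmp3]
  have hPA : P * A = P := by
    rw [hAdef, mul_add, mul_one, mul_smul_comm, hPU, smul_zero, add_zero]
  have hPAinv : P * A⁻¹ = P := by
    calc P * A⁻¹ = (P * A) * A⁻¹ := by rw [hPA]
    _ = P * (A * A⁻¹) := by rw [mul_assoc]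
    _ = P := by rw [Matrix.mul_nonsing_inv A hdet, mul_one]
  have hP1U : P * (1 - U) = P := by
    rw [mul_sub, mul_one, hPU, sub_zero]
  have hPx : P *ᵥ (A⁻¹ *ᵥ ((1 - U) *ᵥ d)) = P *ᵥ d := by
    rw [mulVec_mulVec, mulVec_mulVec, hPAinv, hP1U]
  have hle : ∀ w : Fin m → ℝ, ∑ i, ((P *ᵥ w) i) ^ 2 ≤ ∑ i, (w i) ^ 2 := by
    intro w
    have hPz : P *ᵥ (w - P *ᵥ w) = 0 := by
      rw [mulVec_sub, mulVec_mulVec, hPP, sub_self]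
    have hcross : (P *ᵥ w) ⬝ᵥ (w - P *ᵥ w) = 0 := by
      calc (P *ᵥ w) ⬝ᵥ (w - P *ᵥ w)
          = (w - P *ᵥ w) ⬝ᵥ (P *ᵥ w) := dotProduct_comm _ _
        _ = ((w - P *ᵥ w) ᵥ* P) ⬝ᵥ w := dotProduct_mulVec _ _ _
        _ = ((w - P *ᵥ w) ᵥ* Pᵀ) ⬝ᵥ w := by rw [hPt]
        _ = (P *ᵥ (w - P *ᵥ w)) ⬝ᵥ w := by rw [vecMul_transpose]
        _ = 0 := by rw [hPz, zero_dotProduct]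
    have hsum : ∑ i, (w i) ^ 2 =
        ∑ i, ((P *ᵥ w) i) ^ 2 + 2 * ((P *ᵥ w) ⬝ᵥ (w - P *ᵥ w))
          + ∑ i, ((w - P *ᵥ w) i) ^ 2 := by
      calc ∑ i, (w i) ^ 2
          = ∑ i, (((P *ᵥ w) i) ^ 2 + 2 * ((P *ᵥ w) i * (w - P *ᵥ w) i)
              + ((w - P *ᵥ w) i) ^ 2) := by
            refine Finset.sum_congr rfl fun i _ => ?_
            have : w i = (P *ᵥ w) i + (w - P *ᵥ w) i := by simp
            rw [this]; ring
        _ = _ := by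
            rw [Finset.sum_add_distrib, Finset.sum_add_distrib, ← Finset.mul_sum]
            rfl
    have h1 : (0 : ℝ) ≤ ∑ i, ((w - P *ᵥ w) i) ^ 2 :=
      Finset.sum_nonneg fun i _ => sq_nonneg _
    rw [hsum, hcross]
    linarith
  have key : ∑ i, ((P *ᵥ d) i) ^ 2 ≤ ∑ i, ((A⁻¹ *ᵥ ((1 - U) *ᵥ d)) i) ^ 2 := by
    rw [← hPx]
    exact hle _
  exact Real.sqrt_le_sqrt key
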